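/- Let n ≥ 2, m ≥ 0, k ≥ 0, and let W be a smooth function on S^{n-1} with a nonzero spherical harmonic component of degree ≥ m. Then there exist linear functions f₁, ..., f_k ∈ Ω₁ such that the product f_k ⋯ f₁ · W has a nonzero spherical harmonic component of degree ≥ m+k. In particular there exists f in the space S_k of sums of spherical harmonics of degree ≤ k with parity k with deg(f·W) ≥ m+k. -/

import Mathlib

open scoped RealInnerProductSpace

noncomputable section

abbrev E (n : ℕ) := EuclideanSpace ℝ (Fin n)

def evalP {n : ℕ} (P : MvPolynomial (Fin n) ℝ) (v : E n) : ℝ :=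
  MvPolynomial.eval (fun i => v i) P

def sphereS (n : ℕ) : Set (E n) := Metric.sphere 0 1

def IsDegLE {n : ℕ} (m : ℕ) (S : Set (E n)) (f : E n → ℝ) : Prop :=
  ∃ P : MvPolynomial (Fin n) ℝ, P.totalDegree ≤ m ∧ ∀ v ∈ S, f v = evalP P v

def HasCompGE {n : ℕ} : ℕ → Set (E n) → (E n → ℝ) → Prop
  | 0, S, f => ¬ ∀ v ∈ S, f v = 0
  | (m + 1), S, f => ¬ IsDegLE m S f

namespace XAux

open MvPolynomial

variable {n : ℕ}

def rsq (n : ℕ) : MvPolynomial (Fin n) ℝ := ∑ i : Fin n, X i ^ 2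

lemma rsq_hom : (rsq n).IsHomogeneous 2 :=
  IsHomogeneous.sum _ _ _ fun i _ => isHomogeneous_X_pow i 2


lemma mem_sphere_iff_sum_sq {v : E n} : v ∈ sphereS n ↔ ∑ i, v i ^ 2 = 1 := by
  rw [sphereS, mem_sphere_iff_norm, sub_zero, EuclideanSpace.norm_eq, Real.sqrt_eq_one]
  simp_rw [Real.norm_eq_abs, sq_abs]


lemma eval_rsq {v : E n} (hv : v ∈ sphereS n) :
    MvPolynomial.eval (fun i => v i) (rsq n) = 1 := by
  have h := mem_sphere_iff_sum_sq.mp hv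
  simpa [rsq] using h

lemma rsq_ne_zero (hn : 1 ≤ n) : rsq n ≠ 0 := by
  intro h0
  have h1 : MvPolynomial.eval (fun _ : Fin n => (1:ℝ)) (rsq n) = 0 := by rw [h0]; simp
  simp [rsq] at h1
  omega


lemma homog_eval_smul {φ : MvPolynomial (Fin n) ℝ} {d : ℕ} (hφ : φ.IsHomogeneous d)
    (t : ℝ) (x : Fin n → ℝ) :
    MvPolynomial.eval (fun i => t * x i) φ = t ^ d * MvPolynomial.eval x φ := by
  rw [eval_eq, eval_eq, Finset.mul_sum]
  refine Finset.sum_congr rfl fun dm hdm => ?_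
  have hdeg : ∑ i ∈ dm.support, dm i = d := by
    have h1 := hφ (mem_support_iff.mp hdm)
    change Finsupp.weight (fun _ => 1) dm = d at h1
    rw [← Finsupp.degree_eq_weight_one] at h1
    rw [Finsupp.degree_apply] at h1; exact h1
  calc (coeff dm φ) * ∏ i ∈ dm.support, (t * x i) ^ dm i
      = coeff dm φ * ((∏ i ∈ dm.support, t ^ dm i) * ∏ i ∈ dm.support, x i ^ dm i) := by
        rw [← Finset.prod_mul_distrib]; simp_rw [mul_pow]
    _ = t ^ d * (coeff dm φ * ∏ i ∈ dm.support, x i ^ dm i) := by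
        rw [Finset.prod_pow_eq_pow_sum, hdeg]; ring

lemma homog_vanish {φ : MvPolynomial (Fin n) ℝ} {d : ℕ} (hd : 0 < d)
    (hφ : φ.IsHomogeneous d)
    (h : ∀ v ∈ sphereS n, MvPolynomial.eval (fun i => v i) φ = 0) : φ = 0 := by
  apply hφ.eq_zero_of_forall_eval_eq_zero
  intro x
  by_cases hx : x = 0
  · subst hx
    have h0 := homog_eval_smul hφ 0 (fun _ => 0)
    simpa [zero_pow hd.ne'] using h0
  · have hex : ∃ i, x i ≠ 0 := by
      by_contra hc; push_neg at hc; exact hx (funext hc)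
    obtain ⟨i, hi⟩ := hex
    have hsum : 0 < ∑ i, x i ^ 2 :=
      Finset.sum_pos' (fun j _ => sq_nonneg _) ⟨i, Finset.mem_univ i, by positivity⟩
    set t := Real.sqrt (∑ i, x i ^ 2) with ht
    have ht0 : 0 < t := Real.sqrt_pos.mpr hsum
    have hts : t ^ 2 = ∑ i, x i ^ 2 := Real.sq_sqrt hsum.le
    set v : E n := WithLp.toLp 2 (fun i => t⁻¹ * x i) with hv
    have hvs : v ∈ sphereS n := by
      rw [mem_sphere_iff_sum_sq]
      have : ∑ i, (t⁻¹ * x i) ^ 2 = (t ^ 2)⁻¹ * ∑ i, x i ^ 2 := by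
        rw [Finset.mul_sum]
        exact Finset.sum_congr rfl fun i _ => by rw [mul_pow, inv_pow]
      calc ∑ i, v i ^ 2 = (t ^ 2)⁻¹ * ∑ i, x i ^ 2 := this
        _ = 1 := by rw [hts]; field_simp
    have hkey := homog_eval_smul hφ t (fun i => v i)
    have hxv : (fun i => t * v i) = x := by
      funext i; rw [hv]; simp only [PiLp.toLp_apply]; field_simp
    rw [hxv, h v hvs, mul_zero] at hkey
    exact hkey

lemma neg_mem_sphere {v : E n} (hv : v ∈ sphereS n) : -v ∈ sphereS n := by
  rw [mem_sphere_iff_sum_sq] at hv ⊢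
  simpa [neg_sq] using hv

lemma parity_vanish {φ ψ : MvPolynomial (Fin n) ℝ} {a b : ℕ} (ha : 0 < a) (hb : 0 < b)
    (hab : (a + b) % 2 = 1)
    (hφ : φ.IsHomogeneous a) (hψ : ψ.IsHomogeneous b)
    (h : ∀ v ∈ sphereS n, MvPolynomial.eval (fun i => v i) φ
        + MvPolynomial.eval (fun i => v i) ψ = 0) :
    φ = 0 ∧ ψ = 0 := by
  have key : ∀ v ∈ sphereS n, MvPolynomial.eval (fun i => v i) φ = 0
      ∧ MvPolynomial.eval (fun i => v i) ψ = 0 := by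
    intro v hv
    have h1 := h v hv
    have h2 := h (-v) (neg_mem_sphere hv)
    have e1 : (fun i => (-v) i) = fun i => (-1 : ℝ) * v i := by
      funext i; simp
    rw [e1, homog_eval_smul hφ, homog_eval_smul hψ] at h2
    rcases Nat.even_or_odd a with ha2 | ha2
    · have ha2' := Nat.even_iff.mp ha2
      have hb2 : Odd b := Nat.odd_iff.mpr (by omega)
      rw [ha2.neg_one_pow, hb2.neg_one_pow] at h2
      constructor <;> nlinarith [h1, h2]
    · have ha2' := Nat.odd_iff.mp ha2
      have hb2 : Even b := Nat.even_iff.mpr (by omega)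
      rw [ha2.neg_one_pow, hb2.neg_one_pow] at h2
      constructor <;> nlinarith [h1, h2]
  exact ⟨homog_vanish ha hφ fun v hv => (key v hv).1,
         homog_vanish hb hψ fun v hv => (key v hv).2⟩


def liftE (P : MvPolynomial (Fin n) ℝ) (e : ℕ) : MvPolynomial (Fin n) ℝ :=
  ∑ j ∈ Finset.range (e+1),
    if (e - j) % 2 = 0 then homogeneousComponent j P * rsq n ^ ((e - j)/2) else 0

def liftO (P : MvPolynomial (Fin n) ℝ) (e : ℕ) : MvPolynomial (Fin n) ℝ :=
  ∑ j ∈ Finset.range (e+1),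
    if (e - j) % 2 = 1 then homogeneousComponent j P * rsq n ^ ((e - j)/2) else 0

lemma liftE_hom (P : MvPolynomial (Fin n) ℝ) (e : ℕ) : (liftE P e).IsHomogeneous e := by
  apply IsHomogeneous.sum
  intro j hj
  have hj' : j < e + 1 := Finset.mem_range.mp hj
  split_ifs with hp
  · have he : j + 2 * ((e - j)/2) = e := by omega
    have hh := (homogeneousComponent_isHomogeneous j P).mul (rsq_hom.pow ((e-j)/2))
    rwa [he] at hh
  · exact isHomogeneous_zero _ _ _

lemma liftO_hom (P : MvPolynomial (Fin n) ℝ) (e : ℕ) : (liftO P e).IsHomogeneous (e-1) := by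
  apply IsHomogeneous.sum
  intro j hj
  have hj' : j < e + 1 := Finset.mem_range.mp hj
  split_ifs with hp
  · have he : j + 2 * ((e - j)/2) = e - 1 := by omega
    have hh := (homogeneousComponent_isHomogeneous j P).mul (rsq_hom.pow ((e-j)/2))
    rwa [he] at hh
  · exact isHomogeneous_zero _ _ _

lemma liftO_zero (P : MvPolynomial (Fin n) ℝ) : liftO P 0 = 0 := by
  simp [liftO]

lemma eval_lift_add (P : MvPolynomial (Fin n) ℝ) (e : ℕ) (hP : P.totalDegree ≤ e)
    {v : E n} (hv : v ∈ sphereS n) :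
    MvPolynomial.eval (fun i => v i) (liftE P e) + MvPolynomial.eval (fun i => v i) (liftO P e)
      = MvPolynomial.eval (fun i => v i) P := by
  have h1 : MvPolynomial.eval (fun i => v i) (rsq n) = 1 := eval_rsq hv
  rw [liftE, liftO, map_sum, map_sum, ← Finset.sum_add_distrib]
  have h2 : ∀ j ∈ Finset.range (e+1),
      (MvPolynomial.eval (fun i => v i)
        (if (e-j)%2 = 0 then homogeneousComponent j P * rsq n ^ ((e-j)/2) else 0)
      + MvPolynomial.eval (fun i => v i)
        (if (e-j)%2 = 1 then homogeneousComponent j P * rsq n ^ ((e-j)/2) else 0))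
      = MvPolynomial.eval (fun i => v i) (homogeneousComponent j P) := by
    intro j hj
    rcases Nat.mod_two_eq_zero_or_one (e - j) with hp | hp
    · rw [if_pos hp, if_neg (by omega), map_zero, add_zero, map_mul, map_pow, h1, one_pow, mul_one]
    · rw [if_neg (by omega), if_pos hp, map_zero, zero_add, map_mul, map_pow, h1, one_pow, mul_one]
  have h3 : (∑ j ∈ Finset.range (e+1), homogeneousComponent j P) = P := by
    conv_rhs => rw [← sum_homogeneousComponent P]
    refine (Finset.sum_subset (Finset.range_subset_range.mpr (Nat.succ_le_succ hP)) ?_).symm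
    intro j hj hnj
    refine homogeneousComponent_eq_zero j P ?_
    simp only [Finset.mem_range] at hnj
    omega
  rw [Finset.sum_congr rfl h2, ← map_sum, h3]

lemma homogComp_totalDegree_ne_zero {φ : MvPolynomial (Fin n) ℝ} (h : φ ≠ 0) :
    homogeneousComponent φ.totalDegree φ ≠ 0 := by
  obtain ⟨d, hd, hdeg⟩ := Finset.exists_mem_eq_sup φ.support
    (support_nonempty.mpr h) fun m => m.sum fun _ e => e
  have hc : coeff d φ ≠ 0 := mem_support_iff.mp hd
  have hcc : coeff d (homogeneousComponent φ.totalDegree φ) = coeff d φ := by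
    rw [coeff_homogeneousComponent, if_pos]
    show (∑ i ∈ d.support, d i) = φ.totalDegree
    rw [totalDegree, hdeg]
    rfl
  intro h0
  rw [h0, coeff_zero] at hcc
  exact hc hcc.symm

lemma rsq_mul_homog {T : MvPolynomial (Fin n) ℝ} {d : ℕ} (hn : 1 ≤ n)
    (h : (rsq n * T).IsHomogeneous d) : T = 0 ∨ 2 + T.totalDegree = d := by
  by_cases hT0 : T = 0
  · exact Or.inl hT0
  right
  by_contra hne
  set t := T.totalDegree with htdef
  have htop : homogeneousComponent t T ≠ 0 := homogComp_totalDegree_ne_zero hT0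
  have hsplit : rsq n * T = ∑ j ∈ Finset.range (t+1), rsq n * homogeneousComponent j T := by
    rw [← Finset.mul_sum, sum_homogeneousComponent]
  have hcomp : homogeneousComponent (2+t) (rsq n * T) = rsq n * homogeneousComponent t T := by
    rw [hsplit, map_sum, Finset.sum_eq_single t]
    · rw [homogeneousComponent_of_mem ((mem_homogeneousSubmodule _ _).mpr
        (rsq_hom.mul (homogeneousComponent_isHomogeneous t T))), if_pos rfl]
    · intro j hj hjt
      rw [homogeneousComponent_of_mem ((mem_homogeneousSubmodule _ _).mpr
        (rsq_hom.mul (homogeneousComponent_isHomogeneous j T))), if_neg (by omega)]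
    · intro hmem
      exact absurd (Finset.self_mem_range_succ t) hmem
  have hz : homogeneousComponent (2+t) (rsq n * T) = 0 := by
    rw [homogeneousComponent_of_mem ((mem_homogeneousSubmodule _ _).mpr h),
      if_neg (by omega)]
  rw [hz] at hcomp
  rcases mul_eq_zero.mp hcomp.symm with h' | h'
  · exact rsq_ne_zero hn h'
  · exact htop h'

lemma X_dvd_sub_subst (i : Fin n) (g : MvPolynomial (Fin n) ℝ) :
    X i ∣ g - aeval (fun k : Fin n => if k = i then (0 : MvPolynomial (Fin n) ℝ) else X k) g := by
  induction g using MvPolynomial.induction_on' with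
  | monomial u a =>
    by_cases hu : u i = 0
    · have heq : aeval (fun k : Fin n => if k = i then (0 : MvPolynomial (Fin n) ℝ) else X k)
          (monomial u a) = monomial u a := by
        rw [aeval_monomial, monomial_eq, algebraMap_eq]
        congr 1
        apply Finsupp.prod_congr
        intro k hk
        rw [if_neg]
        rintro rfl
        exact Finsupp.mem_support_iff.mp hk hu
      rw [heq, sub_self]
      exact dvd_zero _
    · have heq : aeval (fun k : Fin n => if k = i then (0 : MvPolynomial (Fin n) ℝ) else X k)
          (monomial u a) = 0 := by
        rw [aeval_monomial]
        have hz : (u.prod fun k e =>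
            (if k = i then (0:MvPolynomial (Fin n) ℝ) else X k) ^ e) = 0 := by
          apply Finset.prod_eq_zero (Finsupp.mem_support_iff.mpr hu)
          show (if i = i then (0:MvPolynomial (Fin n) ℝ) else X i) ^ u i = 0
          rw [if_pos rfl, zero_pow hu]
        rw [hz, mul_zero]
      rw [heq, sub_zero]
      rw [X_dvd_monomial]
      exact Or.inr hu
  | add p q hp hq =>
    have heq : (p + q) - aeval (fun k : Fin n => if k = i then (0 : MvPolynomial (Fin n) ℝ) else X k) (p+q)
        = (p - aeval (fun k : Fin n => if k = i then (0 : MvPolynomial (Fin n) ℝ) else X k) p)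
        + (q - aeval (fun k : Fin n => if k = i then (0 : MvPolynomial (Fin n) ℝ) else X k) q) := by
      rw [map_add]; ring
    rw [heq]
    exact dvd_add hp hq

lemma X_dvd_of_mul_eq {i j : Fin n} (hij : i ≠ j) {f g : MvPolynomial (Fin n) ℝ}
    (h : X i * f = X j * g) : X i ∣ g := by
  have h1 : aeval (fun k : Fin n => if k = i then (0 : MvPolynomial (Fin n) ℝ) else X k) (X i * f)
      = aeval (fun k : Fin n => if k = i then (0 : MvPolynomial (Fin n) ℝ) else X k) (X j * g) := by
    rw [h]
  rw [map_mul, map_mul, aeval_X, aeval_X, if_pos rfl, if_neg (Ne.symm hij), zero_mul] at h1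
  have h2 : aeval (fun k : Fin n => if k = i then (0 : MvPolynomial (Fin n) ℝ) else X k) g = 0 := by
    rcases mul_eq_zero.mp h1.symm with h' | h'
    · exact absurd h' (X_ne_zero j)
    · exact h'
  have h3 := X_dvd_sub_subst i g
  rwa [h2, sub_zero] at h3


lemma hasCompGE_congr {m : ℕ} {S : Set (E n)} {f g : E n → ℝ}
    (hfg : ∀ v ∈ S, f v = g v) (h : HasCompGE m S f) : HasCompGE m S g := by
  cases m with
  | zero =>
    simp only [HasCompGE] at h ⊢
    intro hg
    exact h fun v hv => (hfg v hv).trans (hg v hv)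
  | succ m =>
    simp only [HasCompGE] at h ⊢
    rintro ⟨P, hP, hPg⟩
    exact h ⟨P, hP, fun v hv => (hfg v hv).trans (hPg v hv)⟩

lemma step (hn : 2 ≤ n) {m : ℕ} {W : E n → ℝ} (h : HasCompGE m (sphereS n) W) :
    ∃ i : Fin n, HasCompGE (m + 1) (sphereS n) (fun v => v i * W v) := by
  by_contra hc
  push_neg at hc
  have hP : ∀ i : Fin n, IsDegLE m (sphereS n) (fun v => v i * W v) := by
    intro i
    have hi := hc i
    simp only [HasCompGE] at hi
    exact not_not.mp hi
  choose P hPdeg hPval using hP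
  set Q : MvPolynomial (Fin n) ℝ := ∑ i : Fin n, X i * P i with hQdef
  have hQdeg : Q.totalDegree ≤ m + 1 := by
    refine (totalDegree_finset_sum _ _).trans ?_
    apply Finset.sup_le
    intro i _
    refine (totalDegree_mul _ _).trans ?_
    have := hPdeg i
    rw [totalDegree_X]
    omega
  have hQval : ∀ v ∈ sphereS n, MvPolynomial.eval (fun i => v i) Q = W v := by
    intro v hv
    rw [hQdef, map_sum]
    have hterm : ∀ i ∈ Finset.univ, MvPolynomial.eval (fun j => v j) (X i * P i)
        = v i ^ 2 * W v := by
      intro i _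
      rw [map_mul, eval_X]
      have := (hPval i v hv).symm
      rw [show evalP (P i) v = MvPolynomial.eval (fun j => v j) (P i) from rfl] at this
      rw [this]
      ring
    rw [Finset.sum_congr rfl hterm, ← Finset.sum_mul, mem_sphere_iff_sum_sq.mp hv, one_mul]
  set A := liftE Q (m+1) with hAdef
  set B := liftO Q (m+1) with hBdef
  have hA : A.IsHomogeneous (m+1) := liftE_hom _ _
  have hB : B.IsHomogeneous m := by
    have := liftO_hom Q (m+1)
    simpa using this
  have hCi : ∀ i : Fin n, (liftE (P i) m).IsHomogeneous m := fun i => liftE_hom _ _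
  have hDi : ∀ i : Fin n, (rsq n * liftO (P i) m).IsHomogeneous (m+1) := by
    intro i
    cases m with
    | zero =>
      rw [liftO_zero, mul_zero]
      exact isHomogeneous_zero _ _ _
    | succ m' =>
      have h1 := rsq_hom.mul (liftO_hom (P i) (m'+1))
      have : 2 + (m' + 1 - 1) = m' + 1 + 1 := by omega
      rwa [this] at h1
  have hkey : ∀ i : Fin n, X i * A = rsq n * liftE (P i) m ∧ X i * B = rsq n * liftO (P i) m := by
    intro i
    have hev : ∀ v ∈ sphereS n,
        MvPolynomial.eval (fun j => v j) (X i * A - rsq n * liftE (P i) m)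
        + MvPolynomial.eval (fun j => v j) (X i * B - rsq n * liftO (P i) m) = 0 := by
      intro v hv
      have e1 := eval_lift_add Q (m+1) hQdeg hv
      rw [hQval v hv] at e1
      have e2 := eval_lift_add (P i) m (hPdeg i) hv
      have e3 : MvPolynomial.eval (fun j => v j) (P i) = v i * W v := by
        have := hPval i v hv
        rw [show evalP (P i) v = MvPolynomial.eval (fun j => v j) (P i) from rfl] at this
        exact this.symm
      rw [e3] at e2
      simp only [map_sub, map_mul, eval_X, eval_rsq hv, one_mul]
      rw [← hAdef, ← hBdef] at *
      linear_combination v i * e1 - e2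
    have hp1 : (X i * A - rsq n * liftE (P i) m).IsHomogeneous (m+2) := by
      have h1 := (isHomogeneous_X ℝ i).mul hA
      have h2 := rsq_hom.mul (hCi i)
      have e1 : 1 + (m+1) = m+2 := by omega
      have e2 : 2 + m = m+2 := by omega
      rw [e1] at h1; rw [e2] at h2
      exact h1.sub h2
    have hp2 : (X i * B - rsq n * liftO (P i) m).IsHomogeneous (m+1) := by
      have h1 := (isHomogeneous_X ℝ i).mul hB
      have e1 : 1 + m = m+1 := by omega
      rw [e1] at h1
      exact h1.sub (hDi i)
    have hz := parity_vanish (by omega) (by omega) (by omega) hp1 hp2 hev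
    exact ⟨sub_eq_zero.mp hz.1, sub_eq_zero.mp hz.2⟩
  have hn1 : (1:ℕ) ≤ n := by omega
  set i0 : Fin n := ⟨0, by omega⟩ with hi0def
  set i1 : Fin n := ⟨1, by omega⟩ with hi1def
  have hi01 : i0 ≠ i1 := by
    intro hif
    have := congrArg Fin.val hif
    simp [hi0def, hi1def] at this
  -- A = rsq * T
  have hswapA : X i0 * liftE (P i1) m = X i1 * liftE (P i0) m := by
    have h01 := (hkey i0).1
    have h10 := (hkey i1).1
    have hmul : rsq n * (X i0 * liftE (P i1) m) = rsq n * (X i1 * liftE (P i0) m) := by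
      linear_combination (X i1 : MvPolynomial (Fin n) ℝ) * h01 - (X i0 : MvPolynomial (Fin n) ℝ) * h10
    exact mul_left_cancel₀ (rsq_ne_zero hn1) hmul
  obtain ⟨T, hT⟩ : X i0 ∣ liftE (P i0) m := X_dvd_of_mul_eq hi01 hswapA
  have hAT : A = rsq n * T := by
    apply mul_left_cancel₀ (X_ne_zero (R := ℝ) i0)
    linear_combination (hkey i0).1 + (rsq n) * hT
  have hswapB : X i0 * liftO (P i1) m = X i1 * liftO (P i0) m := by
    have h01 := (hkey i0).2
    have h10 := (hkey i1).2
    have hmul : rsq n * (X i0 * liftO (P i1) m) = rsq n * (X i1 * liftO (P i0) m) := by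
      linear_combination (X i1 : MvPolynomial (Fin n) ℝ) * h01 - (X i0 : MvPolynomial (Fin n) ℝ) * h10
    exact mul_left_cancel₀ (rsq_ne_zero hn1) hmul
  obtain ⟨U, hU⟩ : X i0 ∣ liftO (P i0) m := X_dvd_of_mul_eq hi01 hswapB
  have hBU : B = rsq n * U := by
    apply mul_left_cancel₀ (X_ne_zero (R := ℝ) i0)
    linear_combination (hkey i0).2 + (rsq n) * hU
  have hTcase := rsq_mul_homog hn1 (hAT ▸ hA)
  have hUcase := rsq_mul_homog hn1 (hBU ▸ hB)
  have hWfin : ∀ v ∈ sphereS n, W v = evalP (T + U) v := by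
    intro v hv
    have e1 := eval_lift_add Q (m+1) hQdeg hv
    rw [hQval v hv] at e1
    rw [← hAdef, ← hBdef] at e1
    have eT : MvPolynomial.eval (fun i => v i) A = MvPolynomial.eval (fun i => v i) T := by
      rw [hAT, map_mul, eval_rsq hv, one_mul]
    have eU : MvPolynomial.eval (fun i => v i) B = MvPolynomial.eval (fun i => v i) U := by
      rw [hBU, map_mul, eval_rsq hv, one_mul]
    rw [eT, eU] at e1
    rw [show evalP (T + U) v = MvPolynomial.eval (fun i => v i) (T + U) from rfl, map_add]
    exact e1.symm
  cases m with
  | zero =>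
    have hT0 : T = 0 := by rcases hTcase with h' | h'; exact h'; omega
    have hU0 : U = 0 := by rcases hUcase with h' | h'; exact h'; omega
    simp only [HasCompGE] at h
    apply h
    intro v hv
    rw [hWfin v hv, hT0, hU0]
    simp [evalP]
  | succ m' =>
    simp only [HasCompGE] at h
    apply h
    refine ⟨T + U, ?_, hWfin⟩
    have hTd : T.totalDegree ≤ m' := by
      rcases hTcase with h' | h'
      · rw [h']; simp
      · omega
    have hUd : U.totalDegree ≤ m' := by
      rcases hUcase with h' | h'
      · rw [h']; simp
      · omega
    exact (totalDegree_add _ _).trans (by omega)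


lemma iter (hn : 2 ≤ n) {m : ℕ} {W : E n → ℝ} (h : HasCompGE m (sphereS n) W) (k : ℕ) :
    ∃ idx : Fin k → Fin n,
      HasCompGE (m + k) (sphereS n) (fun v => (∏ j : Fin k, v (idx j)) * W v) := by
  induction k with
  | zero =>
    exact ⟨Fin.elim0, hasCompGE_congr (fun v hv => by simp) h⟩
  | succ k ih =>
    obtain ⟨idx, hidx⟩ := ih
    obtain ⟨i, hi⟩ := step hn hidx
    refine ⟨(Fin.cons i idx : Fin (k+1) → Fin n), ?_⟩
    have hfg : ∀ v ∈ sphereS n, (v i * ((∏ j : Fin k, v (idx j)) * W v))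
        = (∏ j : Fin (k+1), v ((Fin.cons i idx : Fin (k+1) → Fin n) j)) * W v := by
      intro v hv
      rw [Fin.prod_univ_succ]
      have h0 : (Fin.cons i idx : Fin (k+1) → Fin n) 0 = i := Fin.cons_zero _ _
      have hs : ∀ j : Fin k, (Fin.cons i idx : Fin (k+1) → Fin n) j.succ = idx j :=
        fun j => Fin.cons_succ _ _ _
      rw [h0, Finset.prod_congr rfl fun j _ => congrArg v (hs j)]
      ring
    exact hasCompGE_congr hfg hi


end XAux

/-- If `W` is a smooth function on `S^{n-1}` (n ≥ 2) with a nonzero spherical harmonic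
component of degree `≥ m`, then there are linear functions `f₁, …, f_k ∈ Ω₁` with
`deg(f_k ⋯ f₁ · W) ≥ m + k`; in particular (the product being the restriction of a
homogeneous polynomial of degree `k`, i.e. an element of `S_k = ⊕_j Ω_{k-2j}`) there is
`f ∈ S_k` with `deg(f·W) ≥ m + k`. -/
theorem xray_stmt13 {n m k : ℕ} (hn : 2 ≤ n) (W : E n → ℝ)
    (hW : ContDiff ℝ (⊤ : ℕ∞) W) (h : HasCompGE m (sphereS n) W) :
    (∃ w : Fin k → E n,
      HasCompGE (m + k) (sphereS n) (fun v => (∏ j : Fin k, ⟪w j, v⟫) * W v)) ∧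
    (∃ P : MvPolynomial (Fin n) ℝ, P.IsHomogeneous k ∧
      HasCompGE (m + k) (sphereS n) (fun v => evalP P v * W v)) := by
  obtain ⟨idx, hidx⟩ := XAux.iter hn h k
  constructor
  · refine ⟨fun j => EuclideanSpace.single (idx j) (1:ℝ), ?_⟩
    refine XAux.hasCompGE_congr ?_ hidx
    intro v hv
    congr 1
    refine Finset.prod_congr rfl fun j _ => ?_
    rw [EuclideanSpace.inner_single_left]
    simp
  · refine ⟨∏ j : Fin k, MvPolynomial.X (idx j), ?_, ?_⟩
    · have hh := MvPolynomial.IsHomogeneous.prod Finset.univ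
        (fun j : Fin k => MvPolynomial.X (idx j)) (fun _ => 1)
        (fun j _ => MvPolynomial.isHomogeneous_X ℝ _)
      simpa using hh
    · refine XAux.hasCompGE_congr ?_ hidx
      intro v hv
      congr 1
      rw [show evalP (∏ j : Fin k, MvPolynomial.X (idx j)) v
        = MvPolynomial.eval (fun i => v i) (∏ j : Fin k, MvPolynomial.X (idx j)) from rfl]
      rw [map_prod]
      simp
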